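/- If two functions f, g : ℕ → ℂ admit admissible expressions f(r) = (∑_i n_i α_i^r)/(q^{cr} − 1) and g(r) = (∑_j m_j β_j^r)/(q^{dr} − 1) with the same values for all r ∈ ℕ (f = g as functions), then their duals, obtained by replacing α_i^r with α_i^{−r} and q^{cr} with q^{−cr}, are also equal as functions of r. In particular the dual of an admissible function is well-defined. -/

import Mathlib

open scoped BigOperators

/-- If a finite exponential sum vanishes at all positive integers, then for each
value `V` the sum of coefficients over indices whose base equals `V` vanishes. -/
lemma exp_sum_fiber {ι : Type*} [Fintype ι] (cf : ι → ℂ) (v : ι → ℂ) (hv : ∀ i, v i ≠ 0)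
    (h : ∀ r : ℕ, 0 < r → ∑ i, cf i * v i ^ r = 0) (V : ℂ) :
    ∑ i ∈ Finset.univ.filter (fun i => v i = V), cf i = 0 := by
  by_cases hV : V ∈ Finset.univ.image v
  · obtain ⟨i0, -, hi0⟩ := Finset.mem_image.mp hV
    have hV0 : V ≠ 0 := hi0 ▸ hv i0
    set T : Finset ℂ := insert 0 (Finset.univ.image v) with hT
    set P : Polynomial ℂ :=
      Lagrange.interpolate T id (fun x => if x = V then 1 else 0) with hP
    have hinj : Set.InjOn id (T : Set ℂ) := Function.injective_id.injOn
    have hevalnode : ∀ x ∈ T, P.eval x = if x = V then 1 else 0 := by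
      intro x hx
      exact Lagrange.eval_interpolate_at_node _ hinj hx
    have hP0 : P.coeff 0 = 0 := by
      rw [Polynomial.coeff_zero_eq_eval_zero]
      have := hevalnode 0 (Finset.mem_insert_self _ _)
      simpa [Ne.symm hV0] using this
    have hsum0 : ∑ i, cf i * P.eval (v i) = 0 := by
      have : ∀ i : ι, cf i * P.eval (v i)
          = ∑ s ∈ Finset.range (P.natDegree + 1), P.coeff s * (cf i * v i ^ s) := by
        intro i
        rw [Polynomial.eval_eq_sum_range, Finset.mul_sum]
        congr 1; ext s; ring
      rw [Finset.sum_congr rfl fun i _ => this i, Finset.sum_comm]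
      refine Finset.sum_eq_zero fun s _ => ?_
      rcases Nat.eq_zero_or_pos s with hs | hs
      · simp [hs, hP0]
      · rw [← Finset.mul_sum, h s hs, mul_zero]
    have hsum1 : ∑ i, cf i * P.eval (v i)
        = ∑ i ∈ Finset.univ.filter (fun i => v i = V), cf i := by
      rw [Finset.sum_filter]
      refine Finset.sum_congr rfl fun i _ => ?_
      have hmem : v i ∈ T := Finset.mem_insert_of_mem (Finset.mem_image_of_mem v (Finset.mem_univ i))
      rw [hevalnode _ hmem]
      by_cases hvi : v i = V <;> simp [hvi]
    rw [← hsum1, hsum0]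
  · rw [Finset.sum_eq_zero]
    intro i hi
    exact absurd (Finset.mem_image_of_mem v (Finset.mem_univ i))
      ((Finset.mem_filter.mp hi).2 ▸ hV)

lemma exp_sum_zpow {ι : Type*} [Fintype ι] (cf : ι → ℂ) (v : ι → ℂ) (hv : ∀ i, v i ≠ 0)
    (h : ∀ r : ℕ, 0 < r → ∑ i, cf i * v i ^ r = 0) (z : ℤ) :
    ∑ i, cf i * v i ^ z = 0 := by
  rw [← Finset.sum_fiberwise_of_maps_to
    (fun i _ => Finset.mem_image_of_mem v (Finset.mem_univ i)) (fun i => cf i * v i ^ z)]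
  refine Finset.sum_eq_zero fun V _ => ?_
  have : ∑ i ∈ Finset.univ.filter (fun i => v i = V), cf i * v i ^ z
      = (∑ i ∈ Finset.univ.filter (fun i => v i = V), cf i) * V ^ z := by
    rw [Finset.sum_mul]
    refine Finset.sum_congr rfl fun i hi => ?_
    rw [(Finset.mem_filter.mp hi).2]
  rw [this, exp_sum_fiber cf v hv h V, zero_mul]

lemma rpow_ne_one_of_ne_zero {q : ℝ} (hq : 1 < q) {x : ℝ} (hx : x ≠ 0) : q ^ x ≠ 1 := by
  have hq0 : (0:ℝ) < q := lt_trans zero_lt_one hq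
  rcases hx.lt_or_gt with h | h
  · exact ne_of_lt ((Real.rpow_lt_one_iff_of_pos hq0).mpr (Or.inl ⟨hq, h⟩))
  · exact ne_of_gt ((Real.one_lt_rpow_iff_of_pos hq0).mpr (Or.inl ⟨hq, h⟩))


/-- Well-definedness of the dual of an admissible function: if two admissible
expressions `(∑ i, n i * α i ^ r) / (q ^ (c * r) - 1)` and
`(∑ j, m j * β j ^ r) / (q ^ (d * r) - 1)` define the same function of `r`, then the
dual expressions, obtained by replacing `α ^ r` by `α ^ (-r)` and `q ^ (c*r)` by
`q ^ (-(c*r))`, also define the same function of `r`. -/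
theorem stmt_3 (q : ℝ) (hq : 1 < q) (l l' : ℕ) (c d : ℚ) (hc : c ≠ 0) (hd : d ≠ 0)
    (n : Fin l → ℤ) (m : Fin l' → ℤ) (α : Fin l → ℂ) (β : Fin l' → ℂ)
    (hα : ∀ i, α i ≠ 0) (hβ : ∀ j, β j ≠ 0)
    (h : ∀ r : ℕ, 0 < r →
      (∑ i, (n i : ℂ) * α i ^ (r : ℤ)) / (((q ^ ((c : ℝ) * r) : ℝ) : ℂ) - 1)
        = (∑ j, (m j : ℂ) * β j ^ (r : ℤ)) / (((q ^ ((d : ℝ) * r) : ℝ) : ℂ) - 1)) :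
    ∀ r : ℕ, 0 < r →
      (∑ i, (n i : ℂ) * α i ^ (-(r : ℤ))) / (((q ^ (-((c : ℝ) * r)) : ℝ) : ℂ) - 1)
        = (∑ j, (m j : ℂ) * β j ^ (-(r : ℤ))) / (((q ^ (-((d : ℝ) * r)) : ℝ) : ℂ) - 1) := by
  have hq0 : (0:ℝ) < q := lt_trans zero_lt_one hq
  set Qc : ℂ := ((q ^ (c : ℝ) : ℝ) : ℂ) with hQc
  set Qd : ℂ := ((q ^ (d : ℝ) : ℝ) : ℂ) with hQd
  have hQc0 : Qc ≠ 0 := by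
    simp only [hQc, ne_eq, Complex.ofReal_eq_zero]
    exact (Real.rpow_pos_of_pos hq0 _).ne'
  have hQd0 : Qd ≠ 0 := by
    simp only [hQd, ne_eq, Complex.ofReal_eq_zero]
    exact (Real.rpow_pos_of_pos hq0 _).ne'
  -- rpow-to-pow conversions
  have hre : ∀ (e : ℝ) (r : ℕ), ((q ^ (e * r) : ℝ) : ℂ) = ((q ^ e : ℝ) : ℂ) ^ (r : ℤ) := by
    intro e r
    rw [Real.rpow_mul hq0.le, Real.rpow_natCast]
    push_cast
    rw [zpow_natCast]
  have hre' : ∀ (e : ℝ) (r : ℕ), ((q ^ (-(e * r)) : ℝ) : ℂ) = ((q ^ e : ℝ) : ℂ) ^ (-(r : ℤ)) := by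
    intro e r
    have : -(e * (r : ℝ)) = e * ((-(r:ℤ) : ℤ) : ℝ) := by push_cast; ring
    rw [this, Real.rpow_mul hq0.le, Real.rpow_intCast]
    rw [Complex.ofReal_zpow]
  -- combined exponential sum
  set cf : (Fin l ⊕ Fin l) ⊕ (Fin l' ⊕ Fin l') → ℂ :=
    Sum.elim (Sum.elim (fun i => (n i : ℂ)) (fun i => -(n i : ℂ)))
      (Sum.elim (fun j => -(m j : ℂ)) (fun j => (m j : ℂ))) with hcf
  set vf : (Fin l ⊕ Fin l) ⊕ (Fin l' ⊕ Fin l') → ℂ :=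
    Sum.elim (Sum.elim (fun i => α i * Qd) (fun i => α i))
      (Sum.elim (fun j => β j * Qc) (fun j => β j)) with hvf
  have hvf0 : ∀ i, vf i ≠ 0 := by
    rintro ((i | i) | (j | j))
    · exact mul_ne_zero (hα i) hQd0
    · exact hα i
    · exact mul_ne_zero (hβ j) hQc0
    · exact hβ j
  have hexpand : ∀ z : ℤ, ∑ i, cf i * vf i ^ z
      = (∑ i, (n i : ℂ) * α i ^ z) * (Qd ^ z - 1)
        - (∑ j, (m j : ℂ) * β j ^ z) * (Qc ^ z - 1) := by
    intro z
    simp only [hcf, hvf, Fintype.sum_sum_type, Sum.elim_inl, Sum.elim_inr,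
      mul_zpow, Finset.sum_mul, mul_sub, mul_one, Finset.sum_sub_distrib, neg_mul,
      Finset.sum_neg_distrib]
    ring_nf
    simp only [mul_comm, mul_assoc, mul_left_comm]
    ring
  have hkey : ∀ s : ℕ, 0 < s → ∑ i, cf i * vf i ^ (s : ℕ) = 0 := by
    intro s hs
    have h1 := h s hs
    have hcs : (c : ℝ) * s ≠ 0 := by
      apply mul_ne_zero
      · exact_mod_cast hc
      · exact_mod_cast hs.ne'
    have hds : (d : ℝ) * s ≠ 0 := by
      apply mul_ne_zero
      · exact_mod_cast hd
      · exact_mod_cast hs.ne'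
    have hdenc : (((q ^ ((c : ℝ) * s) : ℝ) : ℂ) - 1) ≠ 0 := by
      rw [sub_ne_zero]
      exact_mod_cast rpow_ne_one_of_ne_zero hq hcs
    have hdend : (((q ^ ((d : ℝ) * s) : ℝ) : ℂ) - 1) ≠ 0 := by
      rw [sub_ne_zero]
      exact_mod_cast rpow_ne_one_of_ne_zero hq hds
    rw [div_eq_div_iff hdenc hdend] at h1
    rw [hre (c : ℝ) s, hre (d : ℝ) s] at h1
    simp only [zpow_natCast] at h1
    have hx := hexpand (s : ℤ)
    simp only [zpow_natCast] at hx
    rw [hx, sub_eq_zero]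
    exact h1
  intro r hr
  have hz := exp_sum_zpow cf vf hvf0 hkey (-(r : ℤ))
  rw [hexpand (-(r : ℤ))] at hz
  have hcr : (c : ℝ) * r ≠ 0 := by
    apply mul_ne_zero
    · exact_mod_cast hc
    · exact_mod_cast hr.ne'
  have hdr : (d : ℝ) * r ≠ 0 := by
    apply mul_ne_zero
    · exact_mod_cast hd
    · exact_mod_cast hr.ne'
  have hdenc : (((q ^ (-((c : ℝ) * r)) : ℝ) : ℂ) - 1) ≠ 0 := by
    rw [sub_ne_zero]
    exact_mod_cast rpow_ne_one_of_ne_zero hq (neg_ne_zero.mpr hcr)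
  have hdend : (((q ^ (-((d : ℝ) * r)) : ℝ) : ℂ) - 1) ≠ 0 := by
    rw [sub_ne_zero]
    exact_mod_cast rpow_ne_one_of_ne_zero hq (neg_ne_zero.mpr hdr)
  rw [div_eq_div_iff hdenc hdend, hre' (c : ℝ) r, hre' (d : ℝ) r]
  rw [sub_eq_zero] at hz
  exact hz
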